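/- If w is an infinite recurrent partial word with a positive but finite number of holes, then w is not ultimately periodic (i.e., w cannot be written as x·v where x is a finite partial word and v is a periodic infinite partial word). -/

import Mathlib

open Set

variable {A : Type*}

/-- The full word `u` occurs at position `i` in the partial word `w`
(`none` is the hole symbol, compatible with every letter). -/
def Occurs (w : ℕ → Option A) (u : List A) (i : ℕ) : Prop :=
  ∀ j : Fin u.length, w (i + (j : ℕ)) = none ∨ w (i + (j : ℕ)) = some (u.get j)

/-- `u` is a subword of `w`: it occurs at some position. -/
def IsSubword (w : ℕ → Option A) (u : List A) : Prop :=
  ∃ i, Occurs w u i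

/-- `u` is a recurrent subword of `w`: it occurs at infinitely many positions. -/
def IsRecSubword (w : ℕ → Option A) (u : List A) : Prop :=
  {i | Occurs w u i}.Infinite

/-- Subword complexity: number of distinct full words of length `n`
that are subwords of `w`. -/
noncomputable def pcomp (w : ℕ → Option A) (n : ℕ) : ℕ :=
  {u : List A | u.length = n ∧ IsSubword w u}.ncard

/-- Number of recurrent subwords of length `n`. -/
noncomputable def rcomp (w : ℕ → Option A) (n : ℕ) : ℕ :=
  {u : List A | u.length = n ∧ IsRecSubword w u}.ncard

/-- `w` is recurrent: every subword occurs infinitely often. -/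
def Recurrent (w : ℕ → Option A) : Prop :=
  ∀ u : List A, IsSubword w u → IsRecSubword w u

/-- `w` is ultimately recurrent: some shift of `w` is recurrent. -/
def UltimatelyRecurrent (w : ℕ → Option A) : Prop :=
  ∃ p, Recurrent (fun i => w (i + p))

/-- `c` is a completion of `w`: it agrees with `w` at every non-hole position. -/
def IsCompletion (w : ℕ → Option A) (c : ℕ → A) : Prop :=
  ∀ i, ∀ a : A, w i = some a → c i = a

/-- `w` is uniformly recurrent: for every subword `u` there is a window size `m`
such that every factor of `w` of length `m` contains an occurrence of `u`. -/
def UniformlyRecurrent (w : ℕ → Option A) : Prop :=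
  ∀ u : List A, IsSubword w u →
    ∃ m, ∀ i, ∃ j, i ≤ j ∧ j + u.length ≤ i + m ∧ Occurs w u j

/-- Every factor of `w` of length `m` contains every length-`n` subword of `w`. -/
def GoodWindow (w : ℕ → Option A) (n m : ℕ) : Prop :=
  ∀ u : List A, u.length = n → IsSubword w u →
    ∀ i, ∃ j, i ≤ j ∧ j + n ≤ i + m ∧ Occurs w u j

/-- The recurrence function `R_w(n)`: the least window size `m` such that every
factor of length `m` contains every subword of length `n`. -/
noncomputable def Rfun (w : ℕ → Option A) (n : ℕ) : ℕ :=
  sInf {m | GoodWindow w n m}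

/-- `w` is ultimately periodic: from some position on, `w` is compatible with a
periodic sequence of letters. -/
def UltimatelyPeriodic (w : ℕ → Option A) : Prop :=
  ∃ N p, 0 < p ∧ ∃ a : ℕ → A, ∀ i, N ≤ i → w i = none ∨ w i = some (a (i % p))

theorem stmt6 [Nontrivial A] (w : ℕ → Option A)
    (hfin : {i | w i = none}.Finite) (hpos : {i | w i = none}.Nonempty)
    (hrec : Recurrent w) :
    ¬ UltimatelyPeriodic w := by
  rintro ⟨N, p, hp, a, ha⟩
  obtain ⟨h, hh⟩ := hpos
  have hh' : w h = none := hh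
  obtain ⟨b, c, hbc⟩ := exists_pair_ne A
  obtain ⟨B, hB⟩ := hfin.bddAbove
  set L := h + p + 1 with hL
  set f : A → ℕ → A := fun d j => (w j).getD (if j = h then d else b) with hf
  have hfh : ∀ d, f d h = d := by intro d; simp [hf, hh']
  have hfne : ∀ d j, j ≠ h → f d j = f b j := by
    intro d j hj; simp [hf, hj]
  set u : A → List A := fun d => List.ofFn (fun j : Fin L => f d j) with hu
  have hlen : ∀ d, (u d).length = L := by simp [hu, hL]
  have hget : ∀ d (j : Fin (u d).length), (u d).get j = f d (j : ℕ) := by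
    intro d j
    rw [List.get_eq_getElem]
    simp only [hu, List.getElem_ofFn]
  have hocc : ∀ d, IsSubword w (u d) := by
    intro d
    refine ⟨0, fun j => ?_⟩
    cases hw : w (0 + (j : ℕ)) with
    | none => exact Or.inl rfl
    | some x =>
      right
      rw [hget]
      rw [Nat.zero_add] at hw
      simp [hf, hw]
  -- key: f d is p-periodic at positions h and h+p
  have key : ∀ d, f d h = f d (h + p) := by
    intro d
    have hinf := hrec (u d) (hocc d)
    obtain ⟨i, hi, hgt⟩ := hinf.exists_gt (max N B)
    have hiN : N ≤ i := le_of_lt (lt_of_le_of_lt (le_max_left _ _) hgt)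
    have hiB : B < i := lt_of_le_of_lt (le_max_right _ _) hgt
    have hval : ∀ j : ℕ, j < L → f d j = a ((i + j) % p) := by
      intro j hj
      have hj' : j < (u d).length := by rw [hlen]; exact hj
      have := hi ⟨j, hj'⟩
      simp only [Fin.val_mk] at this
      have hnh : w (i + j) ≠ none := by
        intro hn
        have : i + j ≤ B := hB hn
        omega
      rcases this with h1 | h1
      · exact absurd h1 hnh
      rcases ha (i + j) (by omega) with h2 | h2
      · exact absurd h2 hnh
      rw [h1] at h2
      have := Option.some.inj h2
      rw [← this, hget]
    have e1 : f d h = a ((i + h) % p) := hval h (by omega)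
    have e2 : f d (h + p) = a ((i + (h + p)) % p) := hval (h + p) (by omega)
    rw [e1, e2, ← Nat.add_assoc, Nat.add_mod_right]
  have hbp : f b h = f b (h + p) := key b
  have hcp : f c h = f c (h + p) := key c
  have hne : h + p ≠ h := by omega
  have : b = c := by
    calc b = f b h := (hfh b).symm
    _ = f b (h + p) := hbp
    _ = f c (h + p) := (hfne c (h + p) hne).symm
    _ = f c h := hcp.symm
    _ = c := hfh c
  exact hbc this
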